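/- In the Witt-algebra module F_{0,0} of functions (action e_n·φ_i = i·φ_{i+n}), the line ℂφ_0 is a W-submodule on which W acts trivially, and on the quotient module dF := F_{0,0}/ℂφ_0 the bilinear form determined by B(φ̄_i, φ̄_j) = j if i + j = 0 and B(φ̄_i, φ̄_j) = 0 otherwise (for i, j ≠ 0, where φ̄_i denotes the class of φ_i) is a well-defined invariant, skew-symmetric, nondegenerate bilinear form. -/

import Mathlib

open scoped Classical

noncomputable section

/-- The underlying space of F_{λ,μ}: finitely supported ℤ-indexed families
(coordinates with respect to the basis (φ_i)_{i ∈ ℤ}). -/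
abbrev FF := ℤ →₀ ℂ

/-- The basis vector φ_i = t^{μ+i}(dt)^λ. -/
def phi (i : ℤ) : FF := Finsupp.single i 1

/-- The action of the Witt-algebra basis element e_n = t^{n+1} d/dt on F_{λ,μ}:
e_n·φ_i = (μ + i + λ(n+1)) φ_{i+n}. -/
def wittE (lam mu : ℂ) (n : ℤ) : Module.End ℂ FF :=
  Finsupp.lsum ℂ (fun i : ℤ =>
    (mu + (i : ℂ) + lam * ((n : ℂ) + 1)) • Finsupp.lsingle (i + n))

/-- Invariance of a bilinear form: B(e_n·u, v) + B(u, e_n·v) = 0 for all n. -/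
def IsWittInvariant (lam mu : ℂ) (B : FF →ₗ[ℂ] FF →ₗ[ℂ] ℂ) : Prop :=
  ∀ (n : ℤ) (u v : FF), B (wittE lam mu n u) v + B u (wittE lam mu n v) = 0

/-- The line ℂφ₀ ⊆ F_{0,0}. -/
def lineSub : Submodule ℂ FF := Submodule.span ℂ {phi 0}

/-- The quotient module dF = F_{0,0}/ℂφ₀. -/
abbrev dF := FF ⧸ lineSub


def Bff : FF →ₗ[ℂ] FF →ₗ[ℂ] ℂ :=
  Finsupp.lsum ℂ fun i => LinearMap.toSpanSingleton ℂ (FF →ₗ[ℂ] ℂ)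
    ((-(i:ℂ)) • (Finsupp.lapply (-i) : FF →ₗ[ℂ] ℂ))

lemma Bff_single (i : ℤ) (c : ℂ) (v : FF) :
    Bff (Finsupp.single i c) v = c * ((-(i:ℂ)) * v (-i)) := by
  rw [Bff, Finsupp.lsum_single]
  simp only [LinearMap.toSpanSingleton_apply, LinearMap.smul_apply, Finsupp.lapply_apply,
    smul_eq_mul]

lemma wittE_single (lam mu : ℂ) (n i : ℤ) (c : ℂ) :
    wittE lam mu n (Finsupp.single i c)
      = (mu + (i:ℂ) + lam * ((n:ℂ)+1)) • Finsupp.single (i+n) c := by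
  rw [wittE, Finsupp.lsum_single]
  simp only [LinearMap.smul_apply, Finsupp.lsingle_apply]

lemma wittE00_single (n i : ℤ) (c : ℂ) :
    wittE 0 0 n (Finsupp.single i c) = (i:ℂ) • Finsupp.single (i+n) c := by
  rw [wittE_single]; ring_nf

lemma Bff_skew (u v : FF) : Bff u v = - Bff v u := by
  induction u using Finsupp.induction_linear with
  | zero => simp
  | add a b ha hb => simp only [map_add, LinearMap.add_apply, ha, hb]; ring
  | single i c =>
    induction v using Finsupp.induction_linear with
    | zero => simp
    | add a b ha hb => simp only [map_add, LinearMap.add_apply, ha, hb]; ring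
    | single j d =>
      rw [Bff_single, Bff_single]
      rcases eq_or_ne j (-i) with h | h
      · subst h
        simp only [Finsupp.single_apply, neg_neg, if_pos rfl]
        push_cast; ring
      · rw [Finsupp.single_apply, Finsupp.single_apply, if_neg h, if_neg]
        · ring
        · omega

lemma Bff_inv (n : ℤ) (u v : FF) :
    Bff (wittE 0 0 n u) v + Bff u (wittE 0 0 n v) = 0 := by
  induction u using Finsupp.induction_linear with
  | zero => simp
  | add a b ha hb =>
    simp only [map_add, LinearMap.add_apply] at *; linear_combination ha + hb
  | single i c =>
    induction v using Finsupp.induction_linear with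
    | zero => simp
    | add a b ha hb =>
      simp only [map_add, LinearMap.add_apply] at *; linear_combination ha + hb
    | single j d =>
      rw [wittE00_single, wittE00_single, map_smul, LinearMap.smul_apply, map_smul,
        Bff_single, Bff_single]
      simp only [smul_eq_mul, Finsupp.single_apply]
      rcases eq_or_ne (i + n + j) 0 with h | h
      · rw [if_pos (by omega), if_pos (by omega)]
        have : (i:ℂ) + n + j = 0 := by exact_mod_cast congrArg (Int.cast : ℤ → ℂ) h
        push_cast
        linear_combination (-(c*d*(i:ℂ))) * this
      · rw [if_neg (by omega), if_neg (by omega)]; ring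

lemma wittE00_line (n : ℤ) (u : FF) (hu : u ∈ lineSub) : wittE 0 0 n u = 0 := by
  rw [lineSub, Submodule.mem_span_singleton] at hu
  obtain ⟨c, rfl⟩ := hu
  rw [map_smul, phi, wittE00_single]
  simp

lemma Bff_line_left (u : FF) (hu : u ∈ lineSub) : Bff u = 0 := by
  rw [lineSub, Submodule.mem_span_singleton] at hu
  obtain ⟨c, rfl⟩ := hu
  have h0 : Bff (phi 0) = 0 := by
    apply LinearMap.ext; intro v
    rw [phi, Bff_single]; simp
  rw [map_smul, h0, smul_zero]

lemma Bff_line_right (u v : FF) (hv : v ∈ lineSub) : Bff u v = 0 := by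
  rw [Bff_skew, Bff_line_left v hv]; simp

def Enq (n : ℤ) : Module.End ℂ dF :=
  lineSub.liftQ (lineSub.mkQ ∘ₗ wittE 0 0 n)
    (fun u hu => by simp [LinearMap.mem_ker, wittE00_line n u hu])

lemma Enq_mk (n : ℤ) (u : FF) : Enq n (lineSub.mkQ u) = lineSub.mkQ (wittE 0 0 n u) := by
  simp [Enq]

def B1 : FF →ₗ[ℂ] dF →ₗ[ℂ] ℂ where
  toFun u := lineSub.liftQ (Bff u) (fun v hv => by
    simp [LinearMap.mem_ker, Bff_line_right u v hv])
  map_add' u v := by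
    apply Submodule.linearMap_qext
    ext w
    simp
  map_smul' c u := by
    apply Submodule.linearMap_qext
    ext w
    simp

def Bq : dF →ₗ[ℂ] dF →ₗ[ℂ] ℂ :=
  lineSub.liftQ B1 (fun u hu => by
    rw [LinearMap.mem_ker]
    apply Submodule.linearMap_qext
    ext w
    simp [B1, Bff_line_left u hu])

lemma Bq_mk (u v : FF) : Bq (lineSub.mkQ u) (lineSub.mkQ v) = Bff u v := by
  simp [Bq, B1]

/-- in F_{0,0} (action e_n·φ_i = i·φ_{i+n}), the line ℂφ₀ is a
W-submodule on which W acts trivially, and on dF = F_{0,0}/ℂφ₀ the induced W-action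
Enq exists and the bilinear form determined by B(φ̄_i, φ̄_j) = j·[i+j = 0]
(for i, j ≠ 0) is a well-defined invariant, skew-symmetric, nondegenerate
bilinear form. -/
theorem statement_4 :
    (∀ n : ℤ, ∀ u ∈ lineSub, wittE 0 0 n u = 0) ∧
    ∃ (Enq : ℤ → Module.End ℂ dF) (Bq : dF →ₗ[ℂ] dF →ₗ[ℂ] ℂ),
      (∀ (n : ℤ) (u : FF), Enq n (lineSub.mkQ u) = lineSub.mkQ (wittE 0 0 n u)) ∧
      (∀ i j : ℤ, i ≠ 0 → j ≠ 0 →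
        Bq (lineSub.mkQ (phi i)) (lineSub.mkQ (phi j))
          = if i + j = 0 then (j : ℂ) else 0) ∧
      (∀ u v, Bq u v = - Bq v u) ∧
      (∀ u, (∀ v, Bq u v = 0) → u = 0) ∧
      (∀ (n : ℤ) (u v : dF), Bq (Enq n u) v + Bq u (Enq n v) = 0) := by
  refine ⟨fun n u hu => wittE00_line n u hu, Enq, Bq, Enq_mk, ?_, ?_, ?_, ?_⟩
  · intro i j hi hj
    rw [phi, phi, Bq_mk, Bff_single]
    rcases eq_or_ne (i + j) 0 with h | h
    · rw [if_pos h, Finsupp.single_apply, if_pos (by omega)]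
      have : (i:ℂ) + j = 0 := by exact_mod_cast congrArg (Int.cast : ℤ → ℂ) h
      linear_combination -this
    · rw [if_neg h, Finsupp.single_apply, if_neg (by omega)]
      ring
  · intro u v
    obtain ⟨u, rfl⟩ := lineSub.mkQ_surjective u
    obtain ⟨v, rfl⟩ := lineSub.mkQ_surjective v
    rw [Bq_mk, Bq_mk, Bff_skew]
  · intro u hu
    obtain ⟨w, rfl⟩ := lineSub.mkQ_surjective u
    have hw : ∀ j : ℤ, (j:ℂ) * w (-j) = 0 := by
      intro j
      have := hu (lineSub.mkQ (phi j))
      rw [Bq_mk, Bff_skew, phi, Bff_single] at this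
      have : (-(j:ℂ)) * w (-j) = 0 := by linear_combination -this
      linear_combination -this
    have hw' : w = (w 0) • phi 0 := by
      ext k
      rw [phi, Finsupp.smul_apply, Finsupp.single_apply]
      rcases eq_or_ne k 0 with rfl | hk
      · rw [if_pos rfl, smul_eq_mul, mul_one]
      · have h1 := hw (-k)
        simp only [neg_neg, Int.cast_neg] at h1
        have hk' : (-(k:ℂ)) ≠ 0 := by
          simp only [ne_eq, neg_eq_zero, Int.cast_eq_zero]; exact hk
        rw [(mul_eq_zero.mp h1).resolve_left hk', if_neg (Ne.symm hk), smul_zero]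
    rw [hw', map_smul]
    have hm : lineSub.mkQ (phi 0) = 0 := by
      rw [Submodule.mkQ_apply, Submodule.Quotient.mk_eq_zero]
      exact Submodule.mem_span_singleton_self _
    rw [hm, smul_zero]
  · intro n u v
    obtain ⟨u, rfl⟩ := lineSub.mkQ_surjective u
    obtain ⟨v, rfl⟩ := lineSub.mkQ_surjective v
    rw [Enq_mk, Enq_mk, Bq_mk, Bq_mk]
    exact Bff_inv n u v

end
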